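/- arXiv:2405.16694 — 5 statements merged into one kernel-verified Lean document; each statement's English description precedes it below -/
import Mathlib

section
/- For fixed A > 0 and b ≠ 0, the function g(x) = (A/2 + x)/√((A/2 + x)² + b²) + (A/2 - x)/√((A/2 - x)² + b²) is monotonically decreasing in x for x > 0. -/
lemma aux_hasDerivAt (b t : ℝ) (hb : b ≠ 0) :
    HasDerivAt (fun t : ℝ => t / Real.sqrt (t ^ 2 + b ^ 2))
      (b ^ 2 / ((t ^ 2 + b ^ 2) * Real.sqrt (t ^ 2 + b ^ 2))) t := by
  have hu : (0:ℝ) < t ^ 2 + b ^ 2 := by positivity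
  have hs : (0:ℝ) < Real.sqrt (t ^ 2 + b ^ 2) := Real.sqrt_pos.mpr hu
  have hinner : HasDerivAt (fun t : ℝ => t ^ 2 + b ^ 2) (2 * t) t := by
    simpa using (hasDerivAt_pow 2 t).add_const (b ^ 2)
  have hsqrt : HasDerivAt (fun t : ℝ => Real.sqrt (t ^ 2 + b ^ 2))
      (2 * t / (2 * Real.sqrt (t ^ 2 + b ^ 2))) t := hinner.sqrt hu.ne'
  have := (hasDerivAt_id t).div hsqrt hs.ne'
  refine this.congr_deriv ?_
  have hss : Real.sqrt (t ^ 2 + b ^ 2) ^ 2 = t ^ 2 + b ^ 2 :=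
    Real.sq_sqrt hu.le
  field_simp
  rw [hss, id_eq]
  ring

/-- For fixed `A > 0` and `b ≠ 0`, the function
`g(x) = (A/2 + x)/√((A/2 + x)² + b²) + (A/2 - x)/√((A/2 - x)² + b²)`
is monotonically decreasing in `x` for `x > 0`. -/
theorem stmt1 (A b : ℝ) (hA : 0 < A) (hb : b ≠ 0) :
    AntitoneOn (fun x : ℝ =>
      (A / 2 + x) / Real.sqrt ((A / 2 + x) ^ 2 + b ^ 2) +
      (A / 2 - x) / Real.sqrt ((A / 2 - x) ^ 2 + b ^ 2)) (Set.Ioi 0) := by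
  have key : StrictAntiOn (fun x : ℝ =>
      (A / 2 + x) / Real.sqrt ((A / 2 + x) ^ 2 + b ^ 2) +
      (A / 2 - x) / Real.sqrt ((A / 2 - x) ^ 2 + b ^ 2)) (Set.Ioi 0) := by
    apply strictAntiOn_of_deriv_neg (convex_Ioi 0)
    · apply Continuous.continuousOn
      have h1 : ∀ c : ℝ, Continuous (fun x : ℝ => Real.sqrt ((A / 2 + c * x) ^ 2 + b ^ 2)) := by
        intro c; fun_prop
      apply Continuous.add
      · apply Continuous.div (by fun_prop) (by fun_prop)
        intro x
        have : (0:ℝ) < (A / 2 + x) ^ 2 + b ^ 2 := by positivity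
        exact (Real.sqrt_pos.mpr this).ne'
      · apply Continuous.div (by fun_prop) (by fun_prop)
        intro x
        have : (0:ℝ) < (A / 2 - x) ^ 2 + b ^ 2 := by positivity
        exact (Real.sqrt_pos.mpr this).ne'
    · intro x hx
      rw [interior_Ioi] at hx
      have hx0 : (0:ℝ) < x := hx
      have d1 : HasDerivAt (fun x : ℝ => (A / 2 + x) / Real.sqrt ((A / 2 + x) ^ 2 + b ^ 2))
          (b ^ 2 / (((A / 2 + x) ^ 2 + b ^ 2) * Real.sqrt ((A / 2 + x) ^ 2 + b ^ 2)) * 1) x := by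
        exact (aux_hasDerivAt b (A / 2 + x) hb).comp x
          (by simpa using (hasDerivAt_id x).const_add (A / 2))
      have d2 : HasDerivAt (fun x : ℝ => (A / 2 - x) / Real.sqrt ((A / 2 - x) ^ 2 + b ^ 2))
          (b ^ 2 / (((A / 2 - x) ^ 2 + b ^ 2) * Real.sqrt ((A / 2 - x) ^ 2 + b ^ 2)) * (-1)) x := by
        exact (aux_hasDerivAt b (A / 2 - x) hb).comp x
          (by simpa using (hasDerivAt_id x).const_sub (A / 2))
      have dg := d1.add d2
      erw [dg.deriv]
      set u1 := (A / 2 + x) ^ 2 + b ^ 2 with hu1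
      set u2 := (A / 2 - x) ^ 2 + b ^ 2 with hu2
      have hu2pos : (0:ℝ) < u2 := by positivity
      have hlt : u2 < u1 := by rw [hu1, hu2]; nlinarith [mul_pos hA hx0]
      have h2s : (0:ℝ) < Real.sqrt u2 := Real.sqrt_pos.mpr hu2pos
      have hslt : Real.sqrt u2 < Real.sqrt u1 := Real.sqrt_lt_sqrt hu2pos.le hlt
      have hmul : u2 * Real.sqrt u2 < u1 * Real.sqrt u1 :=
        mul_lt_mul hlt hslt.le h2s (by positivity)
      have hb2 : (0:ℝ) < b ^ 2 := by positivity
      have : b ^ 2 / (u1 * Real.sqrt u1) < b ^ 2 / (u2 * Real.sqrt u2) :=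
        div_lt_div_of_pos_left hb2 (by positivity) hmul
      linarith
  exact key.antitoneOn
end

section
/- Let d > 0 (d = rΨ). The double integral over the rectangle [−A_x/2 − p, A_x/2 − p] × [−A_z/2 − q, A_z/2 − q] of d/(x² + d² + z²)^{3/2} dx dz equals the sum over x ∈ {A_x/2 + p, A_x/2 − p} and z ∈ {A_z/2 + q, A_z/2 − q} of arctan(xz/(d·√(d² + x² + z²))). -/
/-- Sum over the four corners `x ∈ {A_x/2 ± p}`, `z ∈ {A_z/2 ± q}` of
`arctan(xz/(d·√(d² + x² + z²)))`. -/
noncomputable def cornerSum (d Ax Az p q : ℝ) : ℝ :=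
  Real.arctan ((Ax / 2 + p) * (Az / 2 + q) /
      (d * Real.sqrt (d ^ 2 + (Ax / 2 + p) ^ 2 + (Az / 2 + q) ^ 2))) +
  Real.arctan ((Ax / 2 + p) * (Az / 2 - q) /
      (d * Real.sqrt (d ^ 2 + (Ax / 2 + p) ^ 2 + (Az / 2 - q) ^ 2))) +
  Real.arctan ((Ax / 2 - p) * (Az / 2 + q) /
      (d * Real.sqrt (d ^ 2 + (Ax / 2 - p) ^ 2 + (Az / 2 + q) ^ 2))) +
  Real.arctan ((Ax / 2 - p) * (Az / 2 - q) /
      (d * Real.sqrt (d ^ 2 + (Ax / 2 - p) ^ 2 + (Az / 2 - q) ^ 2)))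

open Real

/-- The two-variable antiderivative. -/
noncomputable def Fc (d x z : ℝ) : ℝ :=
  Real.arctan (x * z / (d * Real.sqrt (d ^ 2 + x ^ 2 + z ^ 2)))

lemma Fc_neg_left (d x z : ℝ) : Fc d (-x) z = -Fc d x z := by
  simp [Fc, neg_mul, neg_div, Real.arctan_neg, neg_sq]

lemma Fc_neg_right (d x z : ℝ) : Fc d x (-z) = -Fc d x z := by
  simp [Fc, mul_neg, neg_div, Real.arctan_neg, neg_sq]

lemma hasDerivAt_inner (d z x : ℝ) (hd : 0 < d) :
    HasDerivAt (fun x => d * x / ((d ^ 2 + z ^ 2) * Real.sqrt (x ^ 2 + d ^ 2 + z ^ 2)))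
      (d / (x ^ 2 + d ^ 2 + z ^ 2) ^ ((3 : ℝ) / 2)) x := by
  have hc2 : 0 < d ^ 2 + z ^ 2 := by positivity
  have ht : 0 < x ^ 2 + d ^ 2 + z ^ 2 := by positivity
  have hs : 0 < Real.sqrt (x ^ 2 + d ^ 2 + z ^ 2) := Real.sqrt_pos.2 ht
  have h1 : HasDerivAt (fun x : ℝ => x ^ 2 + d ^ 2 + z ^ 2) (2 * x) x := by
    have := (hasDerivAt_pow 2 x).add_const (d ^ 2 + z ^ 2)
    simpa [add_assoc] using this
  have hsq : HasDerivAt (fun x : ℝ => Real.sqrt (x ^ 2 + d ^ 2 + z ^ 2))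
      (x / Real.sqrt (x ^ 2 + d ^ 2 + z ^ 2)) x := by
    have := (Real.hasDerivAt_sqrt ht.ne').comp x h1
    refine this.congr_deriv ?_
    field_simp [Function.comp]
  have hden : HasDerivAt (fun x : ℝ => (d ^ 2 + z ^ 2) * Real.sqrt (x ^ 2 + d ^ 2 + z ^ 2))
      ((d ^ 2 + z ^ 2) * (x / Real.sqrt (x ^ 2 + d ^ 2 + z ^ 2))) x :=
    hsq.const_mul _
  have hnum : HasDerivAt (fun x : ℝ => d * x) d x := by
    simpa using (hasDerivAt_id x).const_mul d
  have hdne : (d ^ 2 + z ^ 2) * Real.sqrt (x ^ 2 + d ^ 2 + z ^ 2) ≠ 0 := by positivity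
  have H := hnum.div hden hdne
  refine H.congr_deriv ?_
  set u := Real.sqrt (x ^ 2 + d ^ 2 + z ^ 2) with hu
  have hu2 : u ^ 2 = x ^ 2 + d ^ 2 + z ^ 2 := Real.sq_sqrt ht.le
  have hrp : (x ^ 2 + d ^ 2 + z ^ 2) ^ ((3 : ℝ) / 2) = u ^ 3 := by
    rw [← hu2, ← Real.rpow_natCast u 2, ← Real.rpow_mul hs.le]
    norm_num
  rw [hrp]
  have hune : u ≠ 0 := hs.ne'
  field_simp
  linear_combination hu2

lemma hasDerivAt_outer (d x z : ℝ) (hd : 0 < d) :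
    HasDerivAt (fun z => Real.arctan (x * z / (d * Real.sqrt (d ^ 2 + x ^ 2 + z ^ 2))))
      (d * x / ((d ^ 2 + z ^ 2) * Real.sqrt (x ^ 2 + d ^ 2 + z ^ 2))) z := by
  have hc2 : 0 < d ^ 2 + z ^ 2 := by positivity
  have ht : 0 < d ^ 2 + x ^ 2 + z ^ 2 := by positivity
  have hs : 0 < Real.sqrt (d ^ 2 + x ^ 2 + z ^ 2) := Real.sqrt_pos.2 ht
  have h1 : HasDerivAt (fun z : ℝ => d ^ 2 + x ^ 2 + z ^ 2) (2 * z) z := by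
    have := ((hasDerivAt_pow 2 z).const_add (d ^ 2 + x ^ 2))
    simpa using this
  have hsq : HasDerivAt (fun z : ℝ => Real.sqrt (d ^ 2 + x ^ 2 + z ^ 2))
      (z / Real.sqrt (d ^ 2 + x ^ 2 + z ^ 2)) z := by
    have := (Real.hasDerivAt_sqrt ht.ne').comp z h1
    refine this.congr_deriv ?_
    field_simp [Function.comp]
  have hden : HasDerivAt (fun z : ℝ => d * Real.sqrt (d ^ 2 + x ^ 2 + z ^ 2))
      (d * (z / Real.sqrt (d ^ 2 + x ^ 2 + z ^ 2))) z := hsq.const_mul _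
  have hnum : HasDerivAt (fun z : ℝ => x * z) x z := by
    simpa using (hasDerivAt_id z).const_mul x
  have hdne : d * Real.sqrt (d ^ 2 + x ^ 2 + z ^ 2) ≠ 0 := by positivity
  have hu := hnum.div hden hdne
  have H := (Real.hasDerivAt_arctan (x * z / (d * Real.sqrt (d ^ 2 + x ^ 2 + z ^ 2)))).comp z hu
  set u := Real.sqrt (d ^ 2 + x ^ 2 + z ^ 2) with husq
  have hu2 : u ^ 2 = d ^ 2 + x ^ 2 + z ^ 2 := Real.sq_sqrt ht.le
  have hune : u ≠ 0 := hs.ne'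
  have hx2 : Real.sqrt (x ^ 2 + d ^ 2 + z ^ 2) = u := by rw [husq]; ring_nf
  rw [hx2]
  have h1u : 1 + (x * z / (d * u)) ^ 2 = ((d ^ 2 + x ^ 2) * (d ^ 2 + z ^ 2)) / (d ^ 2 * u ^ 2) := by
    field_simp
    linear_combination (d:ℝ)^2 * hu2
  rw [h1u] at H
  have hDeq : (1 / ((d ^ 2 + x ^ 2) * (d ^ 2 + z ^ 2) / (d ^ 2 * u ^ 2))) *
      ((x * (d * u) - x * z * (d * (z / u))) / (d * u) ^ 2) =
      d * x / ((d ^ 2 + z ^ 2) * u) := by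
    have hne1 : d ^ 2 + x ^ 2 ≠ 0 := by positivity
    field_simp
    ring_nf
    linear_combination x * hu2
  rw [hDeq] at H
  exact H

lemma innerInt (d z a b : ℝ) (hd : 0 < d) :
    (∫ x in a..b, d / (x ^ 2 + d ^ 2 + z ^ 2) ^ ((3 : ℝ) / 2)) =
      d * b / ((d ^ 2 + z ^ 2) * Real.sqrt (b ^ 2 + d ^ 2 + z ^ 2)) -
      d * a / ((d ^ 2 + z ^ 2) * Real.sqrt (a ^ 2 + d ^ 2 + z ^ 2)) := by
  have hcont : Continuous fun x : ℝ => d / (x ^ 2 + d ^ 2 + z ^ 2) ^ ((3 : ℝ) / 2) := by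
    apply continuous_const.div
    · exact Continuous.rpow_const (by continuity) (fun x => by right; norm_num)
    · intro x
      have : (0:ℝ) < x ^ 2 + d ^ 2 + z ^ 2 := by positivity
      exact (Real.rpow_pos_of_pos this _).ne'
  exact intervalIntegral.integral_eq_sub_of_hasDerivAt
    (fun x _ => hasDerivAt_inner d z x hd) (hcont.intervalIntegrable _ _)

lemma outerInt (d a b z1 z2 : ℝ) (hd : 0 < d) :
    (∫ z in z1..z2,
        (d * b / ((d ^ 2 + z ^ 2) * Real.sqrt (b ^ 2 + d ^ 2 + z ^ 2)) -
         d * a / ((d ^ 2 + z ^ 2) * Real.sqrt (a ^ 2 + d ^ 2 + z ^ 2)))) =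
      (Fc d b z2 - Fc d a z2) - (Fc d b z1 - Fc d a z1) := by
  have hc : ∀ c : ℝ, Continuous fun z : ℝ =>
      d * c / ((d ^ 2 + z ^ 2) * Real.sqrt (c ^ 2 + d ^ 2 + z ^ 2)) := by
    intro c
    apply continuous_const.div
    · exact (by continuity : Continuous fun z : ℝ => d ^ 2 + z ^ 2).mul
        ((by continuity : Continuous fun z : ℝ => c ^ 2 + d ^ 2 + z ^ 2).sqrt)
    · intro z
      have h1 : (0:ℝ) < d ^ 2 + z ^ 2 := by positivity
      have h2 : (0:ℝ) < Real.sqrt (c ^ 2 + d ^ 2 + z ^ 2) :=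
        Real.sqrt_pos.2 (by positivity)
      positivity
  have hder : ∀ z ∈ Set.uIcc z1 z2, HasDerivAt (fun z => Fc d b z - Fc d a z)
      (d * b / ((d ^ 2 + z ^ 2) * Real.sqrt (b ^ 2 + d ^ 2 + z ^ 2)) -
       d * a / ((d ^ 2 + z ^ 2) * Real.sqrt (a ^ 2 + d ^ 2 + z ^ 2))) z := by
    intro z _
    exact (hasDerivAt_outer d b z hd).sub (hasDerivAt_outer d a z hd)
  exact intervalIntegral.integral_eq_sub_of_hasDerivAt hder
    (((hc b).sub (hc a)).intervalIntegrable _ _)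

/-- The channel-gain integral of `d/(x² + d² + z²)^{3/2}` over the rectangle
`[−A_x/2 − p, A_x/2 − p] × [−A_z/2 − q, A_z/2 − q]` equals the four-corner
arctan sum. -/
theorem stmt5 (Ax Az p q d : ℝ) (hAx : 0 < Ax) (hAz : 0 < Az) (hd : 0 < d) :
    (∫ z in (-Az / 2 - q)..(Az / 2 - q), ∫ x in (-Ax / 2 - p)..(Ax / 2 - p),
        d / (x ^ 2 + d ^ 2 + z ^ 2) ^ ((3 : ℝ) / 2)) =
      cornerSum d Ax Az p q := by
  have key : (∫ z in (-Az / 2 - q)..(Az / 2 - q), ∫ x in (-Ax / 2 - p)..(Ax / 2 - p),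
        d / (x ^ 2 + d ^ 2 + z ^ 2) ^ ((3 : ℝ) / 2)) =
      (Fc d (Ax / 2 - p) (Az / 2 - q) - Fc d (-Ax / 2 - p) (Az / 2 - q)) -
      (Fc d (Ax / 2 - p) (-Az / 2 - q) - Fc d (-Ax / 2 - p) (-Az / 2 - q)) := by
    rw [← outerInt d (-Ax / 2 - p) (Ax / 2 - p) (-Az / 2 - q) (Az / 2 - q) hd]
    apply intervalIntegral.integral_congr
    intro z _
    exact innerInt d z (-Ax / 2 - p) (Ax / 2 - p) hd
  rw [key]
  have e1 : Fc d (-Ax / 2 - p) (Az / 2 - q) = -Fc d (Ax / 2 + p) (Az / 2 - q) := by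
    rw [show -Ax / 2 - p = -(Ax / 2 + p) by ring, Fc_neg_left]
  have e2 : Fc d (Ax / 2 - p) (-Az / 2 - q) = -Fc d (Ax / 2 - p) (Az / 2 + q) := by
    rw [show -Az / 2 - q = -(Az / 2 + q) by ring, Fc_neg_right]
  have e3 : Fc d (-Ax / 2 - p) (-Az / 2 - q) = Fc d (Ax / 2 + p) (Az / 2 + q) := by
    rw [show -Ax / 2 - p = -(Ax / 2 + p) by ring, show -Az / 2 - q = -(Az / 2 + q) by ring,
      Fc_neg_left, Fc_neg_right, neg_neg]
  rw [e1, e2, e3]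
  show _ = Fc d (Ax / 2 + p) (Az / 2 + q) + Fc d (Ax / 2 + p) (Az / 2 - q) +
    Fc d (Ax / 2 - p) (Az / 2 + q) + Fc d (Ax / 2 - p) (Az / 2 - q)
  ring
end

section
/- For fixed d > 0 and A_x, A_z > 0, the function (p, q) ↦ Σ_{x ∈ {A_x/2 ± p}} Σ_{z ∈ {A_z/2 ± q}} arctan(xz/(d·√(d² + x² + z²))) is monotonically decreasing in |p| for fixed q and monotonically decreasing in |q| for fixed p. -/
open Real Set

/-! Auxiliary definitions and lemmas -/

noncomputable def fA (d z x : ℝ) : ℝ :=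
  Real.arctan (x * z / (d * Real.sqrt (d ^ 2 + x ^ 2 + z ^ 2)))

noncomputable def W (c t : ℝ) : ℝ :=
  t * (3 * c + 2 * t ^ 2) / ((c + t ^ 2) * Real.sqrt (c + t ^ 2))

noncomputable def Psi (d z1 z2 s : ℝ) : ℝ :=
  z1 / ((d ^ 2 + s) * Real.sqrt (d ^ 2 + s + z1 ^ 2)) +
  z2 / ((d ^ 2 + s) * Real.sqrt (d ^ 2 + s + z2 ^ 2))

lemma hasDerivAt_fA (d z : ℝ) (hd : 0 < d) (x : ℝ) :
    HasDerivAt (fun x => fA d z x)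
      (d * z / ((d ^ 2 + x ^ 2) * Real.sqrt (d ^ 2 + x ^ 2 + z ^ 2))) x := by
  have hS : 0 < d ^ 2 + x ^ 2 + z ^ 2 := by positivity
  have hr : 0 < Real.sqrt (d ^ 2 + x ^ 2 + z ^ 2) := Real.sqrt_pos.2 hS
  have h1 : HasDerivAt (fun x : ℝ => d ^ 2 + x ^ 2 + z ^ 2) (2 * x) x := by
    simpa using ((hasDerivAt_pow 2 x).const_add (d ^ 2)).add_const (z ^ 2)
  have hsq : HasDerivAt (fun x => Real.sqrt (d ^ 2 + x ^ 2 + z ^ 2))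
      (x / Real.sqrt (d ^ 2 + x ^ 2 + z ^ 2)) x := by
    have := h1.sqrt hS.ne'
    convert this using 1
    field_simp
  have hden : HasDerivAt (fun x => d * Real.sqrt (d ^ 2 + x ^ 2 + z ^ 2))
      (d * (x / Real.sqrt (d ^ 2 + x ^ 2 + z ^ 2))) x := hsq.const_mul d
  have hnum : HasDerivAt (fun x : ℝ => x * z) z x := by
    simpa using (hasDerivAt_id x).mul_const z
  have hden_ne : d * Real.sqrt (d ^ 2 + x ^ 2 + z ^ 2) ≠ 0 := by positivity
  have hu := (hnum.div hden hden_ne).arctan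
  refine hu.congr_deriv ?_
  symm
  simp only [Pi.div_apply]
  have hr2 : Real.sqrt (d ^ 2 + x ^ 2 + z ^ 2) ^ 2 = d ^ 2 + x ^ 2 + z ^ 2 :=
    Real.sq_sqrt hS.le
  have h2 : 0 < d ^ 2 + x ^ 2 := by positivity
  set r := Real.sqrt (d ^ 2 + x ^ 2 + z ^ 2) with hrdef
  have hrne : r ≠ 0 := hr.ne'
  field_simp
  ring_nf
  linear_combination (-(z*x^2)) * hr2

lemma hasDerivAt_W (c : ℝ) (hc : 0 < c) (t : ℝ) :
    HasDerivAt (W c) (3 * c ^ 2 / ((c + t ^ 2) ^ 2 * Real.sqrt (c + t ^ 2))) t := by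
  have hS : 0 < c + t ^ 2 := by positivity
  have hr : 0 < Real.sqrt (c + t ^ 2) := Real.sqrt_pos.2 hS
  have h1 : HasDerivAt (fun t : ℝ => c + t ^ 2) (2 * t) t := by
    simpa using (hasDerivAt_pow 2 t).const_add c
  have hsq : HasDerivAt (fun t => Real.sqrt (c + t ^ 2))
      (t / Real.sqrt (c + t ^ 2)) t := by
    have := h1.sqrt hS.ne'
    convert this using 1
    field_simp
  have hnum : HasDerivAt (fun t : ℝ => t * (3 * c + 2 * t ^ 2))
      (1 * (3 * c + 2 * t ^ 2) + t * (2 * (2 * t))) t := by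
    have h2 : HasDerivAt (fun t : ℝ => 3 * c + 2 * t ^ 2) (2 * (2 * t)) t := by
      simpa [mul_comm] using ((hasDerivAt_pow 2 t).const_mul 2).const_add (3 * c)
    exact (hasDerivAt_id t).mul h2
  have hden : HasDerivAt (fun t => (c + t ^ 2) * Real.sqrt (c + t ^ 2))
      (2 * t * Real.sqrt (c + t ^ 2) + (c + t ^ 2) * (t / Real.sqrt (c + t ^ 2))) t :=
    h1.mul hsq
  have hden_ne : (c + t ^ 2) * Real.sqrt (c + t ^ 2) ≠ 0 := by positivity
  have h := hnum.div hden hden_ne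
  refine h.congr_deriv ?_
  symm
  have hr2 : Real.sqrt (c + t ^ 2) ^ 2 = c + t ^ 2 := Real.sq_sqrt hS.le
  set r := Real.sqrt (c + t ^ 2) with hrdef
  have hrne : r ≠ 0 := hr.ne'
  field_simp
  ring_nf
  linear_combination (-(3*c*t^2+2*t^4)) * hr2

lemma W_neg (c t : ℝ) : W c (-t) = - W c t := by
  simp only [W, neg_sq]
  ring

lemma W_mono (c : ℝ) (hc : 0 < c) : Monotone (W c) := by
  apply monotone_of_deriv_nonneg
  · exact fun t => (hasDerivAt_W c hc t).differentiableAt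
  · intro t
    rw [(hasDerivAt_W c hc t).deriv]
    positivity

lemma hasDerivAt_PsiTerm (d z : ℝ) (s : ℝ) (hds : 0 < d ^ 2 + s) :
    HasDerivAt (fun s => z / ((d ^ 2 + s) * Real.sqrt (d ^ 2 + s + z ^ 2)))
      (-(W (d ^ 2 + s) z) / (2 * (d ^ 2 + s) ^ 2)) s := by
  have hS : 0 < d ^ 2 + s + z ^ 2 := by positivity
  have hr : 0 < Real.sqrt (d ^ 2 + s + z ^ 2) := Real.sqrt_pos.2 hS
  have h0 : HasDerivAt (fun s : ℝ => d ^ 2 + s) 1 s := by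
    simpa using (hasDerivAt_id s).const_add (d ^ 2)
  have h1 : HasDerivAt (fun s : ℝ => d ^ 2 + s + z ^ 2) 1 s := h0.add_const (z ^ 2)
  have hsq : HasDerivAt (fun s => Real.sqrt (d ^ 2 + s + z ^ 2))
      (1 / (2 * Real.sqrt (d ^ 2 + s + z ^ 2))) s := h1.sqrt hS.ne'
  have hden : HasDerivAt (fun s => (d ^ 2 + s) * Real.sqrt (d ^ 2 + s + z ^ 2))
      (1 * Real.sqrt (d ^ 2 + s + z ^ 2) +
        (d ^ 2 + s) * (1 / (2 * Real.sqrt (d ^ 2 + s + z ^ 2)))) s := h0.mul hsq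
  have hden_ne : (d ^ 2 + s) * Real.sqrt (d ^ 2 + s + z ^ 2) ≠ 0 := by positivity
  have h := (hasDerivAt_const s z).div hden hden_ne
  refine h.congr_deriv ?_
  symm
  have hr2 : Real.sqrt (d ^ 2 + s + z ^ 2) ^ 2 = d ^ 2 + s + z ^ 2 := Real.sq_sqrt hS.le
  set r := Real.sqrt (d ^ 2 + s + z ^ 2) with hrdef
  have hrne : r ≠ 0 := hr.ne'
  have hWr : W (d ^ 2 + s) z = z * (3 * (d ^ 2 + s) + 2 * z ^ 2) / ((d ^ 2 + s + z ^ 2) * r) := by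
    unfold W
    have : d ^ 2 + s + z ^ 2 = (d ^ 2 + s) + z ^ 2 := by ring
    rw [hrdef, this]
  rw [hWr]
  have hcne : d ^ 2 + s ≠ 0 := hds.ne'
  field_simp
  ring_nf
  linear_combination (-(z*(d^2+s))) * hr2

lemma Psi_anti (d z1 z2 : ℝ) (hd : 0 < d) (hz : |z2| ≤ z1) :
    AntitoneOn (Psi d z1 z2) (Ici 0) := by
  have hder : ∀ s : ℝ, 0 ≤ s → HasDerivAt (Psi d z1 z2)
      (-(W (d ^ 2 + s) z1 + W (d ^ 2 + s) z2) / (2 * (d ^ 2 + s) ^ 2)) s := by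
    intro s hs
    have hds : 0 < d ^ 2 + s := add_pos_of_pos_of_nonneg (pow_pos hd 2) hs
    have h := (hasDerivAt_PsiTerm d z1 s hds).add (hasDerivAt_PsiTerm d z2 s hds)
    refine h.congr_deriv ?_
    symm
    ring
  apply antitoneOn_of_deriv_nonpos (convex_Ici 0)
  · exact fun s hs => ((hder s hs).continuousAt).continuousWithinAt
  · intro s hs
    rw [interior_Ici] at hs
    exact ((hder s hs.le).differentiableAt).differentiableWithinAt
  · intro s hs
    rw [interior_Ici] at hs
    rw [(hder s hs.le).deriv]
    have hc : 0 < d ^ 2 + s := add_pos_of_pos_of_nonneg (pow_pos hd 2) hs.le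
    have h1 : -z1 ≤ z2 := by
      have := abs_le.1 hz; linarith [this.1]
    have h2 : W (d ^ 2 + s) (-z1) ≤ W (d ^ 2 + s) z2 := W_mono _ hc h1
    rw [W_neg] at h2
    apply div_nonpos_of_nonpos_of_nonneg
    · linarith
    · positivity

lemma g_anti (d a z1 z2 : ℝ) (hd : 0 < d) (ha : 0 ≤ a) (hz : |z2| ≤ z1) :
    AntitoneOn (fun p => fA d z1 (a + p) + fA d z2 (a + p) +
      fA d z1 (a - p) + fA d z2 (a - p)) (Ici 0) := by
  have hder : ∀ p : ℝ, HasDerivAt (fun p => fA d z1 (a + p) + fA d z2 (a + p) +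
      fA d z1 (a - p) + fA d z2 (a - p))
      (d * (Psi d z1 z2 ((a + p) ^ 2) - Psi d z1 z2 ((a - p) ^ 2))) p := by
    intro p
    have hip : HasDerivAt (fun p : ℝ => a + p) 1 p := by
      simpa using (hasDerivAt_id p).const_add a
    have him : HasDerivAt (fun p : ℝ => a - p) (-1) p := by
      simpa using (hasDerivAt_id p).const_sub a
    have h1 := (hasDerivAt_fA d z1 hd (a + p)).comp p hip
    have h2 := (hasDerivAt_fA d z2 hd (a + p)).comp p hip
    have h3 := (hasDerivAt_fA d z1 hd (a - p)).comp p him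
    have h4 := (hasDerivAt_fA d z2 hd (a - p)).comp p him
    have h := ((h1.add h2).add h3).add h4
    refine h.congr_deriv ?_
    symm
    unfold Psi
    ring
  apply antitoneOn_of_deriv_nonpos (convex_Ici 0)
  · exact (continuous_iff_continuousAt.2 fun p => (hder p).continuousAt).continuousOn
  · intro p hp
    exact ((hder p).differentiableAt).differentiableWithinAt
  · intro p hp
    rw [interior_Ici] at hp
    rw [(hder p).deriv]
    have hp0 : (0:ℝ) ≤ p := hp.le
    have hsq : (a - p) ^ 2 ≤ (a + p) ^ 2 := by nlinarith
    have hPsi := Psi_anti d z1 z2 hd hz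
      (mem_Ici.2 (by positivity : (0:ℝ) ≤ (a - p) ^ 2))
      (mem_Ici.2 (by positivity : (0:ℝ) ≤ (a + p) ^ 2)) hsq
    have : Psi d z1 z2 ((a + p) ^ 2) - Psi d z1 z2 ((a - p) ^ 2) ≤ 0 := by linarith
    exact mul_nonpos_of_nonneg_of_nonpos hd.le this

lemma cornerSum_eq (d Ax Az p q : ℝ) :
    cornerSum d Ax Az p q = fA d (Az / 2 + q) (Ax / 2 + p) + fA d (Az / 2 - q) (Ax / 2 + p) +
      fA d (Az / 2 + q) (Ax / 2 - p) + fA d (Az / 2 - q) (Ax / 2 - p) := rfl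

lemma cornerSum_neg_p (d Ax Az p q : ℝ) :
    cornerSum d Ax Az (-p) q = cornerSum d Ax Az p q := by
  unfold cornerSum
  ring_nf

lemma cornerSum_neg_q (d Ax Az p q : ℝ) :
    cornerSum d Ax Az p (-q) = cornerSum d Ax Az p q := by
  unfold cornerSum
  ring_nf

lemma cornerSum_swap (d Ax Az p q : ℝ) :
    cornerSum d Ax Az p q = cornerSum d Az Ax q p := by
  unfold cornerSum
  ring_nf

lemma cornerSum_abs (d Ax Az p q : ℝ) :
    cornerSum d Ax Az p q = cornerSum d Ax Az |p| q := by
  rcases abs_cases p with ⟨h, _⟩ | ⟨h, _⟩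
  · rw [h]
  · rw [h, cornerSum_neg_p]

lemma key (d Ax Az : ℝ) (hd : 0 < d) (hAx : 0 < Ax) (hAz : 0 < Az) :
    ∀ q p₁ p₂ : ℝ, |p₁| ≤ |p₂| →
      cornerSum d Ax Az p₂ q ≤ cornerSum d Ax Az p₁ q := by
  have main : ∀ q : ℝ, 0 ≤ q → ∀ p₁ p₂ : ℝ, |p₁| ≤ |p₂| →
      cornerSum d Ax Az p₂ q ≤ cornerSum d Ax Az p₁ q := by
    intro q hq p₁ p₂ hp
    rw [cornerSum_abs d Ax Az p₁ q, cornerSum_abs d Ax Az p₂ q]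
    have hz : |Az / 2 - q| ≤ Az / 2 + q := abs_le.2 ⟨by linarith, by linarith⟩
    have hg := g_anti d (Ax / 2) (Az / 2 + q) (Az / 2 - q) hd (by linarith) hz
    have e : ∀ p : ℝ, cornerSum d Ax Az p q =
        fA d (Az / 2 + q) (Ax / 2 + p) + fA d (Az / 2 - q) (Ax / 2 + p) +
          fA d (Az / 2 + q) (Ax / 2 - p) + fA d (Az / 2 - q) (Ax / 2 - p) :=
      fun p => cornerSum_eq d Ax Az p q
    rw [e, e]
    exact hg (abs_nonneg p₁) (abs_nonneg p₂) hp
  intro q p₁ p₂ hp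
  rcases le_or_gt 0 q with hq | hq
  · exact main q hq p₁ p₂ hp
  · rw [← cornerSum_neg_q d Ax Az p₁ q, ← cornerSum_neg_q d Ax Az p₂ q]
    exact main (-q) (by linarith) p₁ p₂ hp

/-- The LoS SNR objective is monotonically decreasing in `|p|` for fixed `q`
and monotonically decreasing in `|q|` for fixed `p`. -/
theorem stmt6 (d Ax Az : ℝ) (hd : 0 < d) (hAx : 0 < Ax) (hAz : 0 < Az) :
    (∀ q p₁ p₂ : ℝ, |p₁| ≤ |p₂| →
        cornerSum d Ax Az p₂ q ≤ cornerSum d Ax Az p₁ q) ∧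
    (∀ p q₁ q₂ : ℝ, |q₁| ≤ |q₂| →
        cornerSum d Ax Az p q₂ ≤ cornerSum d Ax Az p q₁) := by
  constructor
  · exact key d Ax Az hd hAx hAz
  · intro p q₁ q₂ h
    rw [cornerSum_swap d Ax Az p q₁, cornerSum_swap d Ax Az p q₂]
    exact key d Az Ax hd hAz hAx p q₁ q₂ h
end

section
/- The function f(x) = arctan(x/(c·√(c² + 2x))) for c > 0, x > 0 is strictly concave: its second derivative is negative for all x > 0. -/
open Real

/-- For `c > 0`, the function `f(x) = arctan(x/(c·√(c² + 2x)))` is strictly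
concave on `x > 0`: its second derivative is negative for all `x > 0`. -/
theorem stmt9 (c : ℝ) (hc : 0 < c) :
    StrictConcaveOn ℝ (Set.Ioi 0)
      (fun x : ℝ => Real.arctan (x / (c * Real.sqrt (c ^ 2 + 2 * x)))) ∧
    ∀ x : ℝ, 0 < x →
      deriv (deriv
        (fun x : ℝ => Real.arctan (x / (c * Real.sqrt (c ^ 2 + 2 * x))))) x
        < 0 := by
  set f : ℝ → ℝ := fun x : ℝ => Real.arctan (x / (c * Real.sqrt (c ^ 2 + 2 * x))) with hf
  set F : ℝ → ℝ := fun x : ℝ => c / ((c ^ 2 + x) * Real.sqrt (c ^ 2 + 2 * x)) with hF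
  have hcne : c ≠ 0 := hc.ne'
  -- first derivative
  have hA : ∀ x : ℝ, 0 < x → HasDerivAt f (F x) x := by
    intro x hx
    have harg : (0:ℝ) < c ^ 2 + 2 * x := by positivity
    set s := Real.sqrt (c ^ 2 + 2 * x) with hsdef
    have hspos : 0 < s := Real.sqrt_pos.mpr harg
    have hs2 : s ^ 2 = c ^ 2 + 2 * x := Real.sq_sqrt harg.le
    have hinner : HasDerivAt (fun y : ℝ => c ^ 2 + 2 * y) 2 x := by
      simpa using (hasDerivAt_id x).const_mul 2 |>.const_add (c ^ 2)
    have hsqrt : HasDerivAt (fun y : ℝ => Real.sqrt (c ^ 2 + 2 * y))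
        (2 / (2 * s)) x := hinner.sqrt harg.ne'
    have hden : HasDerivAt (fun y : ℝ => c * Real.sqrt (c ^ 2 + 2 * y))
        (c * (2 / (2 * s))) x := hsqrt.const_mul c
    have hdnz : c * s ≠ 0 := by positivity
    have hdiv : HasDerivAt (fun y : ℝ => y / (c * Real.sqrt (c ^ 2 + 2 * y)))
        ((1 * (c * s) - x * (c * (2 / (2 * s)))) / (c * s) ^ 2) x :=
      (hasDerivAt_id x).div hden hdnz
    have harct := (Real.hasDerivAt_arctan (x / (c * s))).comp x hdiv
    convert harct using 1
    have hcx : c ^ 2 + x ≠ 0 := by positivity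
    show c / ((c ^ 2 + x) * s) = _
    field_simp
    linear_combination (-x) * hs2
    all_goals rfl
  -- second derivative
  have hB : ∀ x : ℝ, 0 < x → deriv (deriv f) x < 0 := by
    intro x hx
    have harg : (0:ℝ) < c ^ 2 + 2 * x := by positivity
    set s := Real.sqrt (c ^ 2 + 2 * x) with hsdef
    have hspos : 0 < s := Real.sqrt_pos.mpr harg
    have hcx : (0:ℝ) < c ^ 2 + x := by positivity
    have hinner : HasDerivAt (fun y : ℝ => c ^ 2 + 2 * y) 2 x := by
      simpa using (hasDerivAt_id x).const_mul 2 |>.const_add (c ^ 2)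
    have hsqrt : HasDerivAt (fun y : ℝ => Real.sqrt (c ^ 2 + 2 * y))
        (2 / (2 * s)) x := hinner.sqrt harg.ne'
    have hcx' : HasDerivAt (fun y : ℝ => c ^ 2 + y) 1 x := by
      simpa using (hasDerivAt_id x).const_add (c ^ 2)
    have hden : HasDerivAt (fun y : ℝ => (c ^ 2 + y) * Real.sqrt (c ^ 2 + 2 * y))
        (1 * s + (c ^ 2 + x) * (2 / (2 * s))) x := hcx'.mul hsqrt
    have hdnz : (c ^ 2 + x) * s ≠ 0 := by positivity
    have hFd : HasDerivAt F
        ((0 * ((c ^ 2 + x) * s) - c * (1 * s + (c ^ 2 + x) * (2 / (2 * s)))) /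
          ((c ^ 2 + x) * s) ^ 2) x :=
      (hasDerivAt_const x c).div hden hdnz
    have heq : deriv f =ᶠ[nhds x] F := by
      filter_upwards [Ioi_mem_nhds hx] with y hy
      exact (hA y hy).deriv
    rw [heq.deriv_eq, hFd.deriv]
    apply div_neg_of_neg_of_pos
    · have h1 : 0 < 1 * s + (c ^ 2 + x) * (2 / (2 * s)) := by positivity
      nlinarith
    · positivity
  constructor
  · apply strictConcaveOn_of_deriv2_neg (convex_Ioi 0)
    · apply Real.continuous_arctan.comp_continuousOn
      apply ContinuousOn.div continuousOn_id
      · exact (continuous_const.mul (Real.continuous_sqrt.comp (by continuity))).continuousOn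
      · intro x hx
        have hx' : (0:ℝ) < x := hx
        have : (0:ℝ) < Real.sqrt (c ^ 2 + 2 * x) := Real.sqrt_pos.mpr (by positivity)
        positivity
    · intro x hx
      rw [interior_Ioi] at hx
      simpa [Function.iterate_succ, Function.comp] using hB x hx
  · exact hB
end

section
/- For every sufficiently large τ, (1/2)(1 − (1 + 4τ/π)^{−1/2}) > (1/π)·arctan(τ/√(1 + 2τ)); i.e., in the near-field regime a circular activated aperture of the same area achieves a strictly larger normalized SNR than a square one, and the asymptotic coefficients satisfy √π/4 < √2/π (equivalently 2√2/π > √π/2). -/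
open Real Filter
set_option maxHeartbeats 400000

lemma arctan_lower (x : ℝ) (hx : 0 ≤ x) : x / (1 + x ^ 2) ≤ Real.arctan x := by
  have key : ∀ y : ℝ, HasDerivAt (fun z => Real.arctan z - z / (1 + z ^ 2))
      ((1 + y ^ 2)⁻¹ - (1 * (1 + y ^ 2) - y * (2 * y)) / (1 + y ^ 2) ^ 2) y := by
    intro y
    have h1 : (0:ℝ) < 1 + y ^ 2 := by positivity
    have h2 : HasDerivAt (fun z : ℝ => z / (1 + z ^ 2))
        ((1 * (1 + y ^ 2) - y * (2 * y)) / (1 + y ^ 2) ^ 2) y := by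
      have := (hasDerivAt_id y).div
        (((hasDerivAt_pow 2 y).const_add 1)) h1.ne'
      exact this.congr_deriv (by simp)
    exact ((Real.hasDerivAt_arctan y).sub h2).congr_deriv (by simp)
  have mono : Monotone (fun z => Real.arctan z - z / (1 + z ^ 2)) := by
    apply monotone_of_deriv_nonneg
    · exact fun y => (key y).differentiableAt
    · intro y
      rw [(key y).deriv]
      have h1 : (0:ℝ) < 1 + y ^ 2 := by positivity
      have h2 : (1 + y ^ 2)⁻¹ - (1 * (1 + y ^ 2) - y * (2 * y)) / (1 + y ^ 2) ^ 2
          = 2 * y ^ 2 / (1 + y ^ 2) ^ 2 := by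
        field_simp
        ring
      rw [h2]; positivity
  have h0 := mono hx
  simpa using h0

lemma sqrt2_gt : (1.4142 : ℝ) < Real.sqrt 2 :=
  (Real.lt_sqrt (by norm_num)).mpr (by norm_num)

lemma sqrtpi_lt : Real.sqrt π < 1.7725 :=
  (Real.sqrt_lt' (by norm_num)).mpr (by nlinarith [Real.pi_lt_d6])

lemma pi_sqrt_lt : 1.003 * (π * Real.sqrt π) < 4 * Real.sqrt 2 := by
  have h1 := sqrt2_gt
  have h2 := sqrtpi_lt
  have h3 : π < 3.1416 := by linarith [Real.pi_lt_d6]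
  nlinarith [Real.pi_pos, Real.sqrt_nonneg π]

/-- For every sufficiently large `τ`, the circular aperture's normalized SNR
`(1/2)(1 − (1 + 4τ/π)^{−1/2})` strictly exceeds the square aperture's
`(1/π)·arctan(τ/√(1 + 2τ))`; moreover the asymptotic coefficients satisfy
`√π/4 < √2/π` (equivalently `2√2/π > √π/2`). -/
theorem stmt15 :
    (∀ᶠ τ : ℝ in atTop,
      (1 / π) * Real.arctan (τ / Real.sqrt (1 + 2 * τ)) <
        (1 / 2) * (1 - (1 + 4 * τ / π) ^ (-(1 : ℝ) / 2))) ∧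
    Real.sqrt π / 4 < Real.sqrt 2 / π ∧
    2 * Real.sqrt 2 / π > Real.sqrt π / 2 := by
  refine ⟨?_, ?_, ?_⟩
  · filter_upwards [eventually_ge_atTop (1000 : ℝ)] with τ hτ
    have hτ0 : (0:ℝ) < τ := by linarith
    have hπ : (0:ℝ) < π := Real.pi_pos
    have ha0 : (0:ℝ) < 1 + 2 * τ := by linarith
    set a := Real.sqrt (1 + 2 * τ) with ha
    have ha2 : a ^ 2 = 1 + 2 * τ := Real.sq_sqrt ha0.le
    have hapos : 0 < a := Real.sqrt_pos.mpr ha0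
    set x := a / τ with hxdef
    have hxpos : 0 < x := div_pos hapos hτ0
    have hinv : τ / a = x⁻¹ := by field_simp [hxdef]; rw [hxdef]; field_simp
    have hb0 : (0:ℝ) < 1 + 4 * τ / π := by positivity
    have hrpow : (1 + 4 * τ / π) ^ (-(1 : ℝ) / 2) = (Real.sqrt (1 + 4 * τ / π))⁻¹ := by
      rw [show (-(1:ℝ)/2) = -(1/2) by ring, Real.rpow_neg hb0.le, ← Real.sqrt_eq_rpow]
    rw [hrpow, hinv, Real.arctan_inv_of_pos hxpos]
    set b := Real.sqrt (1 + 4 * τ / π) with hbdef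
    have hb : 0 < b := Real.sqrt_pos.mpr hb0
    set t := Real.sqrt τ with htdef
    have ht2 : t ^ 2 = τ := Real.sq_sqrt hτ0.le
    have htpos : 0 < t := Real.sqrt_pos.mpr hτ0
    have ht31 : 31 < t := by nlinarith [ht2, htpos]
    have hsπ : (0:ℝ) < Real.sqrt π := Real.sqrt_pos.mpr hπ
    -- b > 2t/√π
    have hsqrt4 : Real.sqrt (4 * τ / π) = 2 * t / Real.sqrt π := by
      rw [Real.sqrt_div (by positivity), show (4:ℝ) * τ = 2 ^ 2 * τ by ring,
        Real.sqrt_mul (by positivity), Real.sqrt_sq (by norm_num), htdef]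
    have hblt : 2 * t / Real.sqrt π < b := by
      rw [← hsqrt4, hbdef]
      exact Real.sqrt_lt_sqrt (by positivity) (by linarith)
    have h1 : (1/2) * b⁻¹ < Real.sqrt π / (4 * t) := by
      have hinvlt : b⁻¹ < (2 * t / Real.sqrt π)⁻¹ :=
        inv_strictAnti₀ (by positivity) hblt
      rw [inv_div] at hinvlt
      rw [show Real.sqrt π / (4 * t) = (1/2) * (Real.sqrt π / (2 * t)) by ring]
      linarith
    -- lower bound on arctan x / π
    have hxl : Real.sqrt 2 / t ≤ x := by
      have hle : Real.sqrt 2 * t ≤ a := by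
        rw [ha, htdef, ← Real.sqrt_mul (by norm_num) τ]
        exact Real.sqrt_le_sqrt (by linarith)
      rw [hxdef, div_le_div_iff₀ htpos hτ0]
      nlinarith [mul_le_mul_of_nonneg_right hle htpos.le]
    have hx2 : x ^ 2 ≤ 0.003 := by
      have : x ^ 2 = (1 + 2 * τ) / τ ^ 2 := by
        rw [hxdef, div_pow, ha2]
      rw [this, div_le_iff₀ (by positivity)]
      have hp : 0 ≤ (τ - 1000) * τ := mul_nonneg (by linarith) hτ0.le
      linarith
    have h2 : Real.sqrt 2 / (1.003 * t) ≤ Real.arctan x := by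
      have e : Real.sqrt 2 / (1.003 * t) = (Real.sqrt 2 / t) / 1.003 := by
        field_simp
      have hdd : (Real.sqrt 2 / t) / 1.003 ≤ x / (1 + x ^ 2) :=
        div_le_div₀ hxpos.le hxl (by positivity) (by linarith)
      rw [e]
      exact hdd.trans (arctan_lower x hxpos.le)
    have h3 : Real.sqrt π / (4 * t) < Real.sqrt 2 / (1.003 * t) / π := by
      rw [div_div, div_lt_div_iff₀ (by positivity) (by positivity)]
      linarith [mul_lt_mul_of_pos_left pi_sqrt_lt htpos]
    have key : (1/2) * b⁻¹ < Real.arctan x / π := by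
      refine h1.trans (h3.trans_le ?_)
      gcongr
    have e2 : (1/π) * (π/2 - Real.arctan x) = 1/2 - Real.arctan x / π := by
      field_simp
    rw [e2]
    linarith
  · rw [div_lt_div_iff₀ (by norm_num) Real.pi_pos]
    linarith [pi_sqrt_lt, mul_nonneg Real.pi_pos.le (Real.sqrt_nonneg π)]
  · rw [gt_iff_lt, div_lt_div_iff₀ (by norm_num) Real.pi_pos]
    linarith [pi_sqrt_lt, mul_nonneg Real.pi_pos.le (Real.sqrt_nonneg π)]
end
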